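/- For any two strictly positive policies π and μ on T, the expected return satisfies the global lower bound J(π) ≥ J(μ) · (1 − KL(Rμ‖π) + KL(Rμ‖μ)); equivalently, J(π) ≥ J(μ) + Σ_τ R(τ) μ(τ) log(π(τ)/μ(τ)). -/

import Mathlib

/-- Expected return `J(π) = ∑ τ, R τ * π τ`. -/
noncomputable def Jexp {T : Type*} [Fintype T] (R π : T → ℝ) : ℝ := ∑ τ, R τ * π τ

/-- Improved policy `Rπ(τ) = R τ * π τ / J(π)`. -/
noncomputable def impPolicy {T : Type*} [Fintype T] (R π : T → ℝ) (τ : T) : ℝ :=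
  R τ * π τ / Jexp R π

/-- KL divergence between pmfs on a finite type (with `0 * log 0 = 0`). -/
noncomputable def klDiv {T : Type*} [Fintype T] (p q : T → ℝ) : ℝ :=
  ∑ τ, p τ * Real.log (p τ / q τ)

/-- Global lower bound: for strictly positive policies `π` and `μ`,
`J(π) ≥ J(μ) * (1 − KL(Rμ‖π) + KL(Rμ‖μ))`, equivalently
`J(π) ≥ J(μ) + ∑ τ, R τ * μ τ * log (π τ / μ τ)`. -/
theorem lower_bound_trajectory
    {T : Type*} [Fintype T] [Nonempty T]
    (R π μ : T → ℝ) (hR : ∀ τ, 0 < R τ)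
    (hπpos : ∀ τ, 0 < π τ) (hπsum : ∑ τ, π τ = 1)
    (hμpos : ∀ τ, 0 < μ τ) (hμsum : ∑ τ, μ τ = 1) :
    Jexp R μ * (1 - klDiv (impPolicy R μ) π + klDiv (impPolicy R μ) μ) ≤ Jexp R π ∧
      Jexp R μ + ∑ τ, R τ * μ τ * Real.log (π τ / μ τ) ≤ Jexp R π := by
  have hJ : 0 < Jexp R μ := by
    apply Finset.sum_pos
    · intro τ _; exact mul_pos (hR τ) (hμpos τ)
    · exact Finset.univ_nonempty
  have hp : ∀ τ, 0 < impPolicy R μ τ := fun τ =>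
    div_pos (mul_pos (hR τ) (hμpos τ)) hJ
  have key : ∑ τ, R τ * μ τ * Real.log (π τ / μ τ) ≤ Jexp R π - Jexp R μ := by
    have h1 : ∀ τ, R τ * μ τ * Real.log (π τ / μ τ) ≤ R τ * π τ - R τ * μ τ := by
      intro τ
      have hlog : Real.log (π τ / μ τ) ≤ π τ / μ τ - 1 :=
        Real.log_le_sub_one_of_pos (div_pos (hπpos τ) (hμpos τ))
      calc R τ * μ τ * Real.log (π τ / μ τ) ≤ R τ * μ τ * (π τ / μ τ - 1) :=
            mul_le_mul_of_nonneg_left hlog (le_of_lt (mul_pos (hR τ) (hμpos τ)))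
        _ = R τ * π τ - R τ * μ τ := by
            field_simp [(hμpos τ).ne']
    calc ∑ τ, R τ * μ τ * Real.log (π τ / μ τ) ≤ ∑ τ, (R τ * π τ - R τ * μ τ) :=
          Finset.sum_le_sum (fun τ _ => h1 τ)
      _ = Jexp R π - Jexp R μ := by rw [Jexp, Jexp, Finset.sum_sub_distrib]
  have hk : klDiv (impPolicy R μ) μ - klDiv (impPolicy R μ) π
      = ∑ τ, impPolicy R μ τ * Real.log (π τ / μ τ) := by
    rw [klDiv, klDiv, ← Finset.sum_sub_distrib]
    refine Finset.sum_congr rfl (fun τ _ => ?_)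
    rw [← mul_sub]
    congr 1
    rw [Real.log_div (ne_of_gt (hp τ)) (ne_of_gt (hμpos τ)),
        Real.log_div (ne_of_gt (hp τ)) (ne_of_gt (hπpos τ)),
        Real.log_div (ne_of_gt (hπpos τ)) (ne_of_gt (hμpos τ))]
    ring
  have heq : Jexp R μ * (1 - klDiv (impPolicy R μ) π + klDiv (impPolicy R μ) μ)
      = Jexp R μ + ∑ τ, R τ * μ τ * Real.log (π τ / μ τ) := by
    have h2 : 1 - klDiv (impPolicy R μ) π + klDiv (impPolicy R μ) μ
        = 1 + ∑ τ, impPolicy R μ τ * Real.log (π τ / μ τ) := by linarith [hk]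
    rw [h2, mul_add, mul_one, Finset.mul_sum]
    congr 1
    refine Finset.sum_congr rfl (fun τ _ => ?_)
    rw [impPolicy]
    field_simp
  constructor
  · rw [heq]; linarith
  · linarith
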